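/- Let n ≥ 2, α ∈ {1,…,n+1}, φ_α = πα/(n+2), and ω = −2cos φ_α. The set {z ∈ ℂ : z^{n+2} = (−1)^α} \ {e^{iφ_α}, e^{−iφ_α}} has exactly n elements z_1,…,z_n, and the numbers X_k = −(sgn(sin((n+1)φ_α))/(n+2)) · (z_k² − 2 z_k cos φ_α + 1)/z_k^{n+3} are real and satisfy ∑_{k=1}^n X_k z_k^l = σ_l for every integer l with −(n−1) ≤ l ≤ n, where σ_0 = ω, σ_1 = σ_{−1} = 1, and σ_l = 0 for all other such l. -/

import Mathlib

open Complex Finset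

private lemma stmt12_dvd_aux (n : ℕ) (m : ℤ) (h1 : -(2*(n:ℤ)+3) ≤ m) (h2 : m ≤ -1) :
    ((n:ℤ)+2) ∣ m ↔ m = -((n:ℤ)+2) := by
  constructor
  · rintro ⟨q, rfl⟩
    have hn0 : (0:ℤ) ≤ (n:ℤ) := Int.natCast_nonneg n
    have hq1 : q ≤ -1 := by nlinarith
    have hq2 : -2 < q := by nlinarith
    have : q = -1 := by omega
    subst this; ring
  · rintro rfl; exact ⟨-1, by ring⟩

private lemma stmt12_geom_aux (N : ℕ) (ζ : ℂ) (hζ : IsPrimitiveRoot ζ N) (m : ℤ) :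
    ∑ j ∈ Finset.range N, (ζ ^ j) ^ m = if (N:ℤ) ∣ m then (N:ℂ) else 0 := by
  have hrw : ∀ j : ℕ, (ζ ^ j) ^ m = (ζ ^ m) ^ j := fun j => by
    rw [← zpow_natCast ζ j, ← zpow_mul, mul_comm, zpow_mul, zpow_natCast]
  simp only [hrw]
  by_cases hd : (N:ℤ) ∣ m
  · rw [if_pos hd, (hζ.zpow_eq_one_iff_dvd m).mpr hd]
    simp
  · rw [if_neg hd]
    have hne : ζ ^ m ≠ 1 := fun h => hd ((hζ.zpow_eq_one_iff_dvd m).mp h)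
    rw [geom_sum_eq hne]
    have : (ζ ^ m) ^ N = 1 := by
      rw [← zpow_natCast (ζ ^ m) N, ← zpow_mul, mul_comm, zpow_mul, zpow_natCast,
        hζ.pow_eq_one, one_zpow]
    simp [this]

theorem stmt12 (n : ℕ) (hn : 2 ≤ n) (α : ℕ) (hα : α ∈ Finset.Icc 1 (n + 1)) :
    let φ : ℝ := Real.pi * α / (n + 2)
    let ω : ℝ := -2 * Real.cos φ
    let Zset : Set ℂ := {w : ℂ | w ^ (n + 2) = (-1) ^ α} \
      {Complex.exp (Complex.I * (φ : ℂ)), Complex.exp (-Complex.I * (φ : ℂ))}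
    Zset.ncard = n ∧
    ∀ z : Fin n → ℂ, Function.Injective z → Set.range z = Zset →
      let X : Fin n → ℂ := fun k =>
        ((-(Real.sign (Real.sin ((n + 1) * φ)) / (n + 2)) : ℝ) : ℂ) *
          (z k ^ 2 - 2 * z k * ((Real.cos φ : ℝ) : ℂ) + 1) / z k ^ (n + 3)
      (∀ k, (X k).im = 0) ∧
      ∀ l : ℤ, -((n : ℤ) - 1) ≤ l → l ≤ n →
        ∑ k : Fin n, X k * z k ^ l =
          if l = 0 then ((ω : ℝ) : ℂ) else if l = 1 ∨ l = -1 then 1 else 0 := by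
  intro φ ω Zset
  obtain ⟨hα1, hα2⟩ := Finset.mem_Icc.mp hα
  have hφdef : φ = Real.pi * α / (n + 2) := rfl
  have hωdef : ω = -2 * Real.cos φ := rfl
  set N : ℕ := n + 2 with hN
  set c : ℂ := (-1) ^ α with hc
  set u : ℂ := Complex.exp (Complex.I * (φ : ℂ)) with hu
  set v : ℂ := Complex.exp (-Complex.I * (φ : ℂ)) with hv
  have hZdef : Zset = {w : ℂ | w ^ N = c} \ {u, v} := rfl
  have hNne : (N:ℂ) ≠ 0 := Nat.cast_ne_zero.mpr (by omega)
  have hnCne : ((n:ℂ) + 2) ≠ 0 := by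
    have : ((N:ℕ):ℂ) = (n:ℂ) + 2 := by rw [hN]; push_cast; ring
    rw [← this]; exact hNne
  have hNRne : ((n:ℝ) + 2) ≠ 0 := by positivity
  have hc2 : c ^ 2 = 1 := by
    rw [hc, ← pow_mul, mul_comm, pow_mul]; norm_num
  have hcinv : c⁻¹ = c := by rw [hc, ← inv_pow]; norm_num
  have hcne : c ≠ 0 := by rw [hc]; exact pow_ne_zero _ (by norm_num)
  have hu0 : u ≠ 0 := Complex.exp_ne_zero _
  have hv0 : v ≠ 0 := Complex.exp_ne_zero _
  have huv1 : u * v = 1 := by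
    rw [hu, hv, ← Complex.exp_add, show Complex.I * (φ:ℂ) + -Complex.I * (φ:ℂ) = 0 by ring,
      Complex.exp_zero]
  -- φ facts
  have hφpos : 0 < φ := by
    rw [hφdef]
    apply div_pos (mul_pos Real.pi_pos (by exact_mod_cast Nat.pos_of_ne_zero (by omega)))
    positivity
  have hφlt : φ < Real.pi := by
    rw [hφdef, div_lt_iff₀ (by positivity)]
    have : (α : ℝ) < (n:ℝ) + 2 := by exact_mod_cast (by omega : α < n + 2)
    nlinarith [Real.pi_pos]
  have hsinφ : 0 < Real.sin φ := Real.sin_pos_of_pos_of_lt_pi hφpos hφlt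
  -- u^N = c, v^N = c
  have hargu : (N:ℂ) * (Complex.I * (φ:ℂ)) = (α:ℂ) * ((Real.pi:ℂ) * Complex.I) := by
    rw [hφdef, hN]; push_cast; field_simp
  have hexpαπ : Complex.exp ((α:ℂ) * ((Real.pi:ℂ) * Complex.I)) = c := by
    rw [Complex.exp_nat_mul, Complex.exp_pi_mul_I, hc]
  have huN : u ^ N = c := by
    rw [hu, ← Complex.exp_nat_mul, hargu, hexpαπ]
  have hvN : v ^ N = c := by
    rw [hv, ← Complex.exp_nat_mul, show (N:ℂ) * (-Complex.I * (φ:ℂ)) =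
      -((N:ℂ) * (Complex.I * (φ:ℂ))) by ring, hargu, Complex.exp_neg, hexpαπ, hcinv]
  -- u ≠ v
  have huim : u.im = Real.sin φ := by
    rw [hu, show Complex.I * (φ:ℂ) = (φ:ℂ) * Complex.I by ring]
    exact Complex.exp_ofReal_mul_I_im φ
  have hvim : v.im = -Real.sin φ := by
    rw [hv, show -Complex.I * (φ:ℂ) = ((-φ:ℝ):ℂ) * Complex.I by push_cast; ring,
      Complex.exp_ofReal_mul_I_im, Real.sin_neg]
  have huvne : u ≠ v := by
    intro h
    rw [Complex.ext_iff, huim, hvim] at h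
    linarith [h.2]
  -- primitive root setup
  have hNne' : N ≠ 0 := by omega
  haveI : NeZero N := ⟨hNne'⟩
  set ζ : ℂ := Complex.exp (2 * (Real.pi:ℂ) * Complex.I / (N:ℂ)) with hζdef
  have hζ : IsPrimitiveRoot ζ N := Complex.isPrimitiveRoot_exp N hNne'
  have hζ0 : ζ ≠ 0 := Complex.exp_ne_zero _
  set R : Finset ℂ := Finset.image (fun j => u * ζ ^ j) (Finset.range N) with hR
  have hginj : ∀ x ∈ Finset.range N, ∀ y ∈ Finset.range N,
      u * ζ ^ x = u * ζ ^ y → x = y := by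
    intro x hx y hy h
    exact hζ.pow_inj (Finset.mem_range.mp hx) (Finset.mem_range.mp hy)
      (mul_left_cancel₀ hu0 h)
  have hgroot : ∀ j : ℕ, (u * ζ ^ j) ^ N = c := by
    intro j
    rw [mul_pow, ← pow_mul, mul_comm j N, pow_mul, hζ.pow_eq_one, one_pow, mul_one, huN]
  have hRcoe : (R : Set ℂ) = {w : ℂ | w ^ N = c} := by
    ext w
    simp only [hR, Finset.coe_image, Finset.coe_range, Set.mem_image, Set.mem_Iio,
      Set.mem_setOf_eq]
    constructor
    · rintro ⟨j, hj, rfl⟩; exact hgroot j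
    · intro hw
      have hwu : (w * u⁻¹) ^ N = 1 := by
        rw [mul_pow, hw, inv_pow, huN, mul_inv_cancel₀ hcne]
      obtain ⟨j, hj, hji⟩ := hζ.eq_pow_of_pow_eq_one hwu
      refine ⟨j, hj, ?_⟩
      rw [hji]
      field_simp
  have humem : u ∈ R := by
    have : u ∈ (R : Set ℂ) := by rw [hRcoe]; exact huN
    exact_mod_cast this
  have hvmem : v ∈ R := by
    have : v ∈ (R : Set ℂ) := by rw [hRcoe]; exact hvN
    exact_mod_cast this
  have hsub : ({u, v} : Finset ℂ) ⊆ R := by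
    intro x hx
    rcases Finset.mem_insert.mp hx with h | h
    · exact h ▸ humem
    · exact (Finset.mem_singleton.mp h) ▸ hvmem
  have hZeq : Zset = ↑(R \ ({u, v} : Finset ℂ)) := by
    rw [hZdef, Finset.coe_sdiff, hRcoe, Finset.coe_insert, Finset.coe_singleton]
  have hcardR : R.card = N := by
    rw [hR, Finset.card_image_of_injOn (fun x hx y hy h => hginj x hx y hy h),
      Finset.card_range]
  have hcard : (R \ ({u, v} : Finset ℂ)).card = n := by
    rw [Finset.card_sdiff_of_subset hsub, hcardR, Finset.card_pair huvne]
    omega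
  constructor
  · rw [hZeq, Set.ncard_coe_finset, hcard]
  -- main part
  intro z hzinj hzrange
  intro X
  set c₀ : ℂ := ((-(Real.sign (Real.sin ((n + 1) * φ)) / (n + 2)) : ℝ) : ℂ) with hc₀def
  set cφ : ℂ := ((Real.cos φ : ℝ) : ℂ) with hcφdef
  have hXdef : ∀ k, X k = c₀ * (z k ^ 2 - 2 * z k * cφ + 1) / z k ^ (n + 3) := fun k => rfl
  -- the sign computation
  have hsin_eq : Real.sin ((n + 1 : ℝ) * φ) = (-1:ℝ)^(α+1) * Real.sin φ := by
    have h1 : ((n:ℝ) + 1) * φ = (α:ℝ) * Real.pi - φ := by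
      rw [hφdef]; field_simp; ring
    rw [h1, Real.sin_nat_mul_pi_sub, pow_succ]; ring
  have hsign : Real.sign (Real.sin ((n + 1 : ℝ) * φ)) = (-1:ℝ)^(α+1) := by
    rw [hsin_eq]
    rcases Nat.even_or_odd α with he | ho
    · have h1 : (-1:ℝ)^(α+1) = -1 := (Even.add_one he).neg_one_pow
      rw [h1, neg_one_mul]
      exact Real.sign_of_neg (by linarith)
    · have h1 : (-1:ℝ)^(α+1) = 1 := (Odd.add_one ho).neg_one_pow
      rw [h1, one_mul]
      exact Real.sign_of_pos hsinφ
  have hc₀ : c₀ = c / N := by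
    rw [hc₀def, hsign, hc, hN]
    push_cast
    rw [pow_succ]
    field_simp
  -- 2*cφ = u + v
  have hcφ2 : 2 * cφ = u + v := by
    rw [hcφdef, Complex.ofReal_cos, hu, hv,
      show Complex.I * (φ:ℂ) = (φ:ℂ) * Complex.I by ring,
      show -Complex.I * (φ:ℂ) = -((φ:ℂ)) * Complex.I by ring,
      Complex.exp_mul_I, Complex.exp_mul_I, Complex.cos_neg, Complex.sin_neg]
    ring
  -- membership facts for z k
  have hzmem : ∀ k, z k ∈ Zset := by
    intro k
    rw [← hzrange]; exact ⟨k, rfl⟩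
  have hzpow : ∀ k, z k ^ N = c := fun k => (hZdef ▸ hzmem k).1
  have hzne : ∀ k, z k ≠ 0 := by
    intro k h
    have := hzpow k
    rw [h, zero_pow hNne'] at this
    exact hcne this.symm
  -- reality
  have hconjc₀ : (starRingEnd ℂ) c₀ = c₀ := by rw [hc₀def]; exact Complex.conj_ofReal _
  have hconjcφ : (starRingEnd ℂ) cφ = cφ := by rw [hcφdef]; exact Complex.conj_ofReal _
  have hreal : ∀ k, (X k).im = 0 := by
    intro k
    rw [← Complex.conj_eq_iff_im]
    have hwne : z k ≠ 0 := hzne k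
    have hwabs : ‖z k‖ = 1 := by
      have h1 : ‖z k‖ ^ N = 1 := by
        rw [← norm_pow, hzpow k, hc]
        simp
      rcases lt_trichotomy (‖z k‖) 1 with h | h | h
      · have := pow_lt_one₀ (norm_nonneg (z k)) h hNne'; linarith
      · exact h
      · have := one_lt_pow₀ h hNne'; linarith
    have hmc : z k * (starRingEnd ℂ) (z k) = 1 := by
      rw [Complex.mul_conj, Complex.normSq_eq_norm_sq, hwabs]
      norm_num
    have hconjw : (starRingEnd ℂ) (z k) = (z k)⁻¹ :=
      eq_inv_of_mul_eq_one_left (by rw [mul_comm] at hmc; exact hmc)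
    have h2n4 : z k ^ (2*n+4) = 1 := by
      have h' : z k ^ (2*n+4) = (z k ^ N) ^ 2 := by rw [← pow_mul]; congr 1; omega
      rw [h', hzpow k, hc2]
    rw [hXdef k, map_div₀, map_mul, map_add, map_sub, map_mul, map_mul, map_pow, map_pow,
      map_one, map_ofNat, hconjc₀, hconjcφ, hconjw]
    rw [div_eq_div_iff (pow_ne_zero _ (inv_ne_zero hwne)) (pow_ne_zero _ hwne)]
    simp only [inv_pow]
    field_simp
    linear_combination (c₀ * z k ^ 2 * (z k ^ 2 - 2 * z k * cφ + 1)) * h2n4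
  refine ⟨hreal, ?_⟩
  intro l hl1 hl2
  -- conversion of sums
  have hconv : ∀ F : ℂ → ℂ, ∑ k : Fin n, F (z k)
      = (∑ j ∈ Finset.range N, F (u * ζ ^ j)) - (F u + F v) := by
    intro F
    have h1 : ∑ k : Fin n, F (z k) = ∑ w ∈ Finset.image z Finset.univ, F w :=
      (Finset.sum_image (fun a _ b _ h => hzinj h)).symm
    have h2 : Finset.image z Finset.univ = R \ ({u,v} : Finset ℂ) := by
      apply Finset.coe_injective
      rw [Finset.coe_image, Finset.coe_univ, Set.image_univ, hzrange, hZeq]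
    rw [h1, h2, Finset.sum_sdiff_eq_sub hsub, Finset.sum_pair huvne, hR,
      Finset.sum_image hginj]
  have hA : ∀ m : ℤ, ∑ j ∈ Finset.range N, (u * ζ ^ j) ^ m
      = if (N:ℤ) ∣ m then (N:ℂ) * u ^ m else 0 := by
    intro m
    have h1 : ∀ j ∈ Finset.range N, (u * ζ ^ j) ^ m = u ^ m * (ζ ^ j) ^ m :=
      fun j _ => mul_zpow u _ m
    rw [Finset.sum_congr rfl h1, ← Finset.mul_sum, stmt12_geom_aux N ζ hζ m]
    split_ifs with h
    · ring
    · simp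
  have hFrw : ∀ w : ℂ, w ≠ 0 → c₀ * (w ^ 2 - 2 * w * cφ + 1) / w ^ (n + 3) * w ^ l
      = c₀ * (w ^ (l - ((n:ℤ)+1)) - 2 * cφ * w ^ (l - ((n:ℤ)+2)) + w ^ (l - ((n:ℤ)+3))) := by
    intro w hw
    rw [zpow_sub₀ hw, zpow_sub₀ hw, zpow_sub₀ hw,
      show ((n:ℤ)+1) = ((n+1 : ℕ) : ℤ) by push_cast; ring,
      show ((n:ℤ)+2) = ((n+2 : ℕ) : ℤ) by push_cast; ring,
      show ((n:ℤ)+3) = ((n+3 : ℕ) : ℤ) by push_cast; ring,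
      zpow_natCast, zpow_natCast, zpow_natCast]
    field_simp
    ring
  set F : ℂ → ℂ := fun w => c₀ * (w ^ 2 - 2 * w * cφ + 1) / w ^ (n + 3) * w ^ l with hFdef
  have hFval : ∀ w : ℂ, F w = c₀ * (w ^ 2 - 2 * w * cφ + 1) / w ^ (n + 3) * w ^ l :=
    fun w => rfl
  have hPu : u ^ 2 - 2 * u * cφ + 1 = 0 := by linear_combination (-u) * hcφ2 - huv1
  have hPv : v ^ 2 - 2 * v * cφ + 1 = 0 := by linear_combination (-v) * hcφ2 - huv1
  have hFu : F u = 0 := by rw [hFval, hPu]; simp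
  have hFv : F v = 0 := by rw [hFval, hPv]; simp
  have hFg : ∀ j ∈ Finset.range N, F (u * ζ ^ j)
      = c₀ * ((u * ζ ^ j) ^ (l - ((n:ℤ)+1)) - 2 * cφ * (u * ζ ^ j) ^ (l - ((n:ℤ)+2))
        + (u * ζ ^ j) ^ (l - ((n:ℤ)+3))) := by
    intro j _
    rw [hFval]
    exact hFrw _ (mul_ne_zero hu0 (pow_ne_zero _ hζ0))
  have hstep : ∑ k : Fin n, X k * z k ^ l
      = c₀ * ((if (N:ℤ) ∣ (l - ((n:ℤ)+1)) then (N:ℂ) * u ^ (l - ((n:ℤ)+1)) else 0)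
        - 2 * cφ * (if (N:ℤ) ∣ (l - ((n:ℤ)+2)) then (N:ℂ) * u ^ (l - ((n:ℤ)+2)) else 0)
        + (if (N:ℤ) ∣ (l - ((n:ℤ)+3)) then (N:ℂ) * u ^ (l - ((n:ℤ)+3)) else 0)) := by
    have h0 : ∑ k : Fin n, X k * z k ^ l = ∑ k : Fin n, F (z k) :=
      Finset.sum_congr rfl (fun k _ => by rw [hXdef k, hFval])
    rw [h0, hconv F, hFu, hFv, Finset.sum_congr rfl hFg, ← Finset.mul_sum,
      Finset.sum_add_distrib, Finset.sum_sub_distrib, ← Finset.mul_sum, hA, hA, hA]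
    ring
  rw [hstep]
  have hdvd : ∀ m : ℤ, -(2*(n:ℤ)+3) ≤ m → m ≤ -1 → (((N:ℕ):ℤ) ∣ m ↔ m = -((n:ℤ)+2)) := by
    intro m hm1 hm2
    have h' : ((N:ℕ):ℤ) = (n:ℤ)+2 := by rw [hN]; push_cast; ring
    rw [h']
    exact stmt12_dvd_aux n m hm1 hm2
  have humN : u ^ (-((n:ℤ)+2)) = c := by
    rw [zpow_neg, show ((n:ℤ)+2) = ((N:ℕ):ℤ) by rw [hN]; push_cast; ring, zpow_natCast,
      huN, hcinv]
  have hωc : ((ω : ℝ) : ℂ) = -2 * cφ := by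
    rw [hωdef, hcφdef]; push_cast; ring
  by_cases hl0 : l = 0
  · subst hl0
    rw [if_pos rfl,
      if_neg (fun h => by rw [hdvd _ (by omega) (by omega)] at h; omega),
      if_pos ((hdvd _ (by omega) (by omega)).mpr (by omega)),
      if_neg (fun h => by rw [hdvd _ (by omega) (by omega)] at h; omega),
      show (0:ℤ) - ((n:ℤ)+2) = -((n:ℤ)+2) by ring, humN, hc₀, hωc]
    field_simp
    linear_combination (-(2 * cφ * (N:ℂ))) * hc2
  by_cases hl1' : l = 1
  · subst hl1'
    rw [if_neg hl0, if_pos (Or.inl rfl),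
      if_neg (fun h => by rw [hdvd _ (by omega) (by omega)] at h; omega),
      if_neg (fun h => by rw [hdvd _ (by omega) (by omega)] at h; omega),
      if_pos ((hdvd _ (by omega) (by omega)).mpr (by omega)),
      show (1:ℤ) - ((n:ℤ)+3) = -((n:ℤ)+2) by ring, humN, hc₀]
    field_simp
    linear_combination (N:ℂ) * hc2
  by_cases hlm1 : l = -1
  · subst hlm1
    rw [if_neg hl0, if_pos (Or.inr rfl),
      if_pos ((hdvd _ (by omega) (by omega)).mpr (by omega)),
      if_neg (fun h => by rw [hdvd _ (by omega) (by omega)] at h; omega),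
      if_neg (fun h => by rw [hdvd _ (by omega) (by omega)] at h; omega),
      show (-1:ℤ) - ((n:ℤ)+1) = -((n:ℤ)+2) by ring, humN, hc₀]
    field_simp
    linear_combination (N:ℂ) * hc2
  · have d1 : ¬ (((N:ℕ):ℤ) ∣ (l - ((n:ℤ)+1))) := fun h => by
      rw [hdvd _ (by omega) (by omega)] at h; omega
    have d2 : ¬ (((N:ℕ):ℤ) ∣ (l - ((n:ℤ)+2))) := fun h => by
      rw [hdvd _ (by omega) (by omega)] at h; omega
    have d3 : ¬ (((N:ℕ):ℤ) ∣ (l - ((n:ℤ)+3))) := fun h => by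
      rw [hdvd _ (by omega) (by omega)] at h; omega
    have hor : ¬ (l = 1 ∨ l = -1) := by rintro (h1 | h1); exacts [hl1' h1, hlm1 h1]
    rw [if_neg d1, if_neg d2, if_neg d3, if_neg hl0, if_neg hor]
    ring
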